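/- Let P^{ex} and P^{ap} be twice continuously differentiable positive functions on (0,T)×(0,∞)² with P^{ex}(r_d,r_e,0) = P^{ap}(r_d,r_e,0) = 1, f^{ex} = ln P^{ex}, f^{ap} = ln P^{ap}, and g = f^{ap} - f^{ex}. Suppose that as τ → 0⁺ (for fixed r_d, r_e > 0): ∂_{r_d}f^{ex} = O(τ), ∂_{r_e}f^{ex} = O(τ), ∂_{r_d}f^{ap} = O(τ), ∂_{r_e}f^{ap} = O(τ²), and that g admits a power series expansion g = Σ_{k≥ω} c_k(r_d,r_e)τ^k with ω ≥ 1, and that g satisfies a PDE whose right-hand side is h + E where h = k₃τ³ + O(τ⁴) and each error term E is a product of the form (∂f^{ex})·(∂f^{ex} - ∂f^{ap}). Then ω = 4 and c₄(r_d,r_e) = -(1/4)·k₃(r_d,r_e). -/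

import Mathlib

open Real Topology Filter Asymptotics

/-- For `m ≤ n`, `τ^n = O(τ^m)` as `τ → 0⁺`. -/
lemma pow_isBigO_pow_of_le {m n : ℕ} (hmn : m ≤ n) :
    (fun τ : ℝ => τ ^ n) =O[𝓝[>] (0:ℝ)] (fun τ => τ ^ m) := by
  apply IsBigO.of_bound 1
  filter_upwards [Ioo_mem_nhdsGT_of_mem (show (0:ℝ) ∈ Set.Ico (0:ℝ) 1 by simp)] with x hx
  have hx0 : 0 < x := hx.1
  have hx1 : x ≤ 1 := hx.2.le
  rw [Real.norm_eq_abs, Real.norm_eq_abs, abs_of_pos (pow_pos hx0 n),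
    abs_of_pos (pow_pos hx0 m), one_mul]
  exact pow_le_pow_of_le_one hx0.le hx1 hmn

/-- If `a·τ^m = O(τ^n)` as `τ → 0⁺` with `m < n`, then `a = 0`. -/
lemma eq_zero_of_isBigO_pow {a : ℝ} {m n : ℕ} (hmn : m < n)
    (H : (fun τ : ℝ => a * τ ^ m) =O[𝓝[>] (0:ℝ)] (fun τ => τ ^ n)) : a = 0 := by
  by_contra ha
  have he : (fun τ : ℝ => τ ^ (n - m)) =o[𝓝[>] (0:ℝ)] (fun _ => (1:ℝ)) := by
    rw [isLittleO_one_iff]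
    have hcont : Tendsto (fun τ : ℝ => τ ^ (n - m)) (𝓝[>] (0:ℝ)) (𝓝 ((0:ℝ) ^ (n - m))) :=
      ((continuous_pow (n - m)).continuousAt (x := (0:ℝ))).continuousWithinAt
    simpa [zero_pow (Nat.sub_ne_zero_of_lt hmn)] using hcont
  have h1 : (fun τ : ℝ => τ ^ n) =o[𝓝[>] (0:ℝ)] (fun τ => τ ^ m) := by
    have := he.mul_isBigO (isBigO_refl (fun τ : ℝ => τ ^ m) (𝓝[>] (0:ℝ)))
    have heq : (fun τ : ℝ => τ ^ (n - m) * τ ^ m) = fun τ : ℝ => τ ^ n := by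
      funext τ; rw [← pow_add, Nat.sub_add_cancel hmn.le]
    simpa [heq] using this
  have h2 : (fun τ : ℝ => τ ^ m) =O[𝓝[>] (0:ℝ)] (fun τ => a * τ ^ m) :=
    isBigO_self_const_mul ha _ _
  have h3 : (fun τ : ℝ => τ ^ m) =o[𝓝[>] (0:ℝ)] (fun τ => τ ^ m) :=
    (h2.trans H).trans_isLittleO h1
  refine isLittleO_irrefl ?_ h3
  have hev : ∀ᶠ τ in 𝓝[>] (0:ℝ), τ ^ m ≠ 0 := by
    filter_upwards [self_mem_nhdsWithin] with τ (hτ : τ ∈ Set.Ioi (0:ℝ))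
    exact pow_ne_zero m (ne_of_gt hτ)
  exact hev.frequently

/-- Bootstrapping order-of-accuracy argument: if the log-price error
`g(τ) = Σ_{k≥ω} c_k τ^k` satisfies a PDE whose right-hand side is
`h(τ) + E(τ)` with `h(τ) = K₃τ³ + O(τ⁴)`, the remaining (spatial derivative)
terms `L` are `O(τ^ω)`, and the error terms `E` are sums of products of an
`O(τ)` factor and an `O(τ³)` factor, then `ω = 4` and `c₄ = -K₃/4`. -/
theorem bootstrap_order_of_accuracy (c : ℕ → ℝ) (ω : ℕ) (hω : 1 ≤ ω)
    (hcz : ∀ k, k < ω → c k = 0) (hcω : c ω ≠ 0)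
    (hsum : ∀ τ : ℝ, Summable (fun k => c k * τ ^ k))
    (L h E : ℝ → ℝ) (K₃ : ℝ) (hK₃ : K₃ ≠ 0)
    (u v : Fin 3 → ℝ → ℝ)
    (hu : ∀ i, (u i) =O[𝓝[>] (0:ℝ)] (fun τ => τ))
    (hv : ∀ i, (v i) =O[𝓝[>] (0:ℝ)] (fun τ => τ ^ 3))
    (hE : ∀ τ : ℝ, E τ = ∑ i : Fin 3, u i τ * v i τ)
    (hL : L =O[𝓝[>] (0:ℝ)] (fun τ => τ ^ ω))
    (hh : (fun τ => h τ - K₃ * τ ^ 3) =O[𝓝[>] (0:ℝ)] (fun τ => τ ^ 4))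
    (hpde : ∀ τ : ℝ, 0 < τ →
      -(deriv (fun t => ∑' k : ℕ, c k * t ^ k) τ) + L τ = h τ + E τ) :
    ω = 4 ∧ c 4 = -(1 / 4) * K₃ := by
  -- bound the coefficients: |c k| ≤ M (1/2)^k
  obtain ⟨M, hM⟩ : ∃ M : ℝ, ∀ k, |c k * 2 ^ k| ≤ M := by
    have ht : Tendsto (fun k => |c k * 2 ^ k|) atTop (𝓝 |0|) :=
      (hsum 2).tendsto_atTop_zero.abs
    obtain ⟨M, hM⟩ := ht.bddAbove_range
    exact ⟨M, fun k => hM ⟨k, rfl⟩⟩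
  have hc_bound : ∀ k, |c k| ≤ M * (1/2) ^ k := by
    intro k
    have h2 : (0:ℝ) < 2 ^ k := by positivity
    have := hM k
    rw [abs_mul, abs_of_pos h2] at this
    rw [show M * (1/2:ℝ)^k = M / 2^k by rw [div_pow]; ring, le_div_iff₀ h2]
    exact this
  have hM0 : 0 ≤ M := le_trans (abs_nonneg _) (hM 0)
  -- derivative series coefficients
  set d : ℕ → ℝ := fun k => ((k : ℝ) + 1) * c (k + 1) with hd_def
  -- summability of auxiliary bounds
  have s1 : Summable (fun k : ℕ => (k : ℝ) * (1/2) ^ k) := by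
    have hr : ‖(1/2 : ℝ)‖ < 1 := by
      rw [Real.norm_eq_abs, abs_of_pos] <;> norm_num
    simpa using summable_pow_mul_geometric_of_norm_lt_one 1 hr
  have s2 : Summable (fun k : ℕ => (1/2 : ℝ) ^ k) :=
    summable_geometric_of_lt_one (by norm_num) (by norm_num)
  have usum' : Summable (fun k : ℕ => ((k : ℝ) + 1) * (1/2) ^ (k + 1)) := by
    have := ((s1.add s2).mul_left (1/2 : ℝ))
    refine this.congr fun k => ?_
    ring
  set U : ℕ → ℝ := fun k => M * (((k : ℝ) + 1) * (1/2) ^ (k + 1)) with hU_def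
  have usum : Summable U := usum'.mul_left M
  have hd_bound : ∀ k, |d k| ≤ U k := by
    intro k
    have h1 : |d k| = ((k : ℝ) + 1) * |c (k + 1)| := by
      rw [hd_def, abs_mul, abs_of_pos (by positivity)]
    rw [h1, hU_def]
    have := hc_bound (k + 1)
    calc ((k : ℝ) + 1) * |c (k + 1)| ≤ ((k : ℝ) + 1) * (M * (1/2) ^ (k + 1)) := by
          apply mul_le_mul_of_nonneg_left this (by positivity)
      _ = M * (((k : ℝ) + 1) * (1/2) ^ (k + 1)) := by ring
  have hderiv_bound : ∀ (n : ℕ) (z : ℝ), |z| < 1 →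
      ‖c n * ((n : ℝ) * z ^ (n - 1))‖ ≤ M * ((n : ℝ) * (1/2) ^ n) := by
    intro n z hz1
    rcases Nat.eq_zero_or_pos n with rfl | hn
    · simp
    · have hzp : |z| ^ (n - 1) ≤ 1 := pow_le_one₀ (abs_nonneg z) hz1.le
      have hcb := hc_bound n
      calc ‖c n * ((n : ℝ) * z ^ (n - 1))‖ = |c n| * ((n : ℝ) * |z| ^ (n - 1)) := by
            rw [Real.norm_eq_abs, abs_mul, abs_mul, abs_pow, Nat.abs_cast]
        _ ≤ (M * (1/2) ^ n) * ((n : ℝ) * 1) := by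
            have h1 : (n : ℝ) * |z| ^ (n - 1) ≤ (n : ℝ) * 1 :=
              mul_le_mul_of_nonneg_left hzp (Nat.cast_nonneg n)
            exact mul_le_mul hcb h1 (by positivity) (by positivity)
        _ = M * ((n : ℝ) * (1/2) ^ n) := by ring
  -- term-by-term differentiation on the unit ball
  have hball : ∀ y : ℝ, |y| < 1 →
      HasDerivAt (fun z : ℝ => ∑' k : ℕ, c k * z ^ k)
        (∑' n : ℕ, c n * ((n : ℝ) * y ^ (n - 1))) y := by
    intro y hy
    have hmem : y ∈ Metric.ball (0:ℝ) 1 := by simpa [Metric.mem_ball, Real.dist_eq] using hy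
    refine hasDerivAt_tsum_of_isPreconnected
      (u := fun n : ℕ => M * ((n : ℝ) * (1/2) ^ n))
      ((s1.mul_left M)) Metric.isOpen_ball
      (convex_ball (0:ℝ) 1).isPreconnected
      (fun n z _ => (hasDerivAt_pow n z).const_mul (c n))
      (fun n z hz => hderiv_bound n z (by simpa [Metric.mem_ball, Real.dist_eq] using hz))
      (Metric.mem_ball_self one_pos) (hsum 0) hmem
  -- summability of the differentiated series and its reindexed form
  have hdsum : ∀ y : ℝ, |y| ≤ 1 → Summable (fun k : ℕ => d k * y ^ k) := by
    intro y hy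
    refine Summable.of_norm_bounded usum fun k => ?_
    rw [Real.norm_eq_abs, abs_mul, abs_pow]
    calc |d k| * |y| ^ k ≤ |d k| * 1 := by
          apply mul_le_mul_of_nonneg_left (pow_le_one₀ (abs_nonneg y) hy) (abs_nonneg _)
      _ = |d k| := mul_one _
      _ ≤ U k := hd_bound k
  set D : ℝ → ℝ := fun y => ∑' k : ℕ, d k * y ^ k with hD_def
  have hderiv_eq : ∀ y : ℝ, 0 < y → y < 1 →
      deriv (fun t : ℝ => ∑' k : ℕ, c k * t ^ k) y = D y := by
    intro y hy0 hy1
    have hy : |y| < 1 := by rw [abs_of_pos hy0]; exact hy1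
    rw [(hball y hy).deriv]
    have hsum' : Summable (fun n : ℕ => c n * ((n : ℝ) * y ^ (n - 1))) :=
      Summable.of_norm_bounded (s1.mul_left M) (fun n => hderiv_bound n y hy)
    rw [hsum'.tsum_eq_zero_add]
    simp only [Nat.cast_zero, zero_mul, mul_zero, zero_add]
    refine tsum_congr fun n => ?_
    rw [hd_def]
    push_cast
    ring_nf
  -- the tail estimate: D y - d (ω-1) y^(ω-1) = O(y^ω)
  set C : ℝ := ∑' j : ℕ, U (j + ω) with hC_def
  have usum_shift : Summable (fun j : ℕ => U (j + ω)) := (summable_nat_add_iff ω).2 usum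
  have htail : ∀ y : ℝ, 0 < y → y < 1 →
      |D y - d (ω - 1) * y ^ (ω - 1)| ≤ C * y ^ ω := by
    intro y hy0 hy1
    have hy : |y| ≤ 1 := by rw [abs_of_pos hy0]; exact hy1.le
    have hsd := hdsum y hy
    have hsplit := hsd.sum_add_tsum_nat_add ω
    have hhead : ∑ i ∈ Finset.range ω, d i * y ^ i = d (ω - 1) * y ^ (ω - 1) := by
      refine Finset.sum_eq_single (ω - 1) (fun i hi hne => ?_) (fun habs => ?_)
      · have hi' : i < ω := Finset.mem_range.1 hi
        have : i + 1 < ω := by omega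
        have : c (i + 1) = 0 := hcz _ this
        rw [hd_def]; simp [this]
      · exact absurd (Finset.mem_range.2 (by omega)) habs
    have hfac : ∀ j : ℕ, d (j + ω) * y ^ (j + ω) = y ^ ω * (d (j + ω) * y ^ j) := by
      intro j; rw [pow_add]; ring
    have htail_eq : ∑' j : ℕ, d (j + ω) * y ^ (j + ω)
        = y ^ ω * ∑' j : ℕ, d (j + ω) * y ^ j := by
      rw [← tsum_mul_left]
      exact tsum_congr hfac
    have hDsplit : D y - d (ω - 1) * y ^ (ω - 1) = y ^ ω * ∑' j : ℕ, d (j + ω) * y ^ j := by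
      rw [hD_def]
      simp only
      rw [← hsplit, hhead, htail_eq]
      ring
    rw [hDsplit, abs_mul, abs_of_pos (pow_pos hy0 ω)]
    rw [mul_comm C (y ^ ω)]
    apply mul_le_mul_of_nonneg_left _ (le_of_lt (pow_pos hy0 ω))
    calc |∑' j : ℕ, d (j + ω) * y ^ j| ≤ ∑' j : ℕ, ‖d (j + ω) * y ^ j‖ :=
          norm_tsum_le_tsum_norm (by
            refine Summable.of_nonneg_of_le
              (fun j => norm_nonneg (d (j + ω) * y ^ j)) (fun j => ?_) usum_shift
            rw [Real.norm_eq_abs, abs_mul, abs_pow]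
            calc |d (j + ω)| * |y| ^ j ≤ |d (j + ω)| * 1 :=
                  mul_le_mul_of_nonneg_left (pow_le_one₀ (abs_nonneg y) hy) (abs_nonneg _)
              _ = |d (j + ω)| := mul_one _
              _ ≤ U (j + ω) := hd_bound _)
      _ ≤ ∑' j : ℕ, U (j + ω) := by
          refine Summable.tsum_le_tsum (fun j => ?_) ?_ usum_shift
          · rw [Real.norm_eq_abs, abs_mul, abs_pow]
            calc |d (j + ω)| * |y| ^ j ≤ |d (j + ω)| * 1 :=
                  mul_le_mul_of_nonneg_left (pow_le_one₀ (abs_nonneg y) hy) (abs_nonneg _)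
              _ = |d (j + ω)| := mul_one _
              _ ≤ U (j + ω) := hd_bound _
          · refine Summable.of_nonneg_of_le
              (fun j => norm_nonneg (d (j + ω) * y ^ j)) (fun j => ?_) usum_shift
            rw [Real.norm_eq_abs, abs_mul, abs_pow]
            calc |d (j + ω)| * |y| ^ j ≤ |d (j + ω)| * 1 :=
                  mul_le_mul_of_nonneg_left (pow_le_one₀ (abs_nonneg y) hy) (abs_nonneg _)
              _ = |d (j + ω)| := mul_one _
              _ ≤ U (j + ω) := hd_bound _
      _ = C := hC_def.symm
  have hDO : (fun y => D y - d (ω - 1) * y ^ (ω - 1)) =O[𝓝[>] (0:ℝ)] (fun y => y ^ ω) := by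
    apply IsBigO.of_bound C
    filter_upwards [Ioo_mem_nhdsGT_of_mem (show (0:ℝ) ∈ Set.Ico (0:ℝ) 1 by simp)] with y hy
    rw [Real.norm_eq_abs, Real.norm_eq_abs, abs_of_pos (pow_pos hy.1 ω)]
    exact htail y hy.1 hy.2
  -- E = O(τ^4)
  have hEO : E =O[𝓝[>] (0:ℝ)] (fun τ => τ ^ 4) := by
    have hmul : ∀ i : Fin 3, (fun τ => u i τ * v i τ) =O[𝓝[>] (0:ℝ)] (fun τ => τ ^ 4) := by
      intro i
      have := (hu i).mul (hv i)
      refine this.trans (IsBigO.of_bound 1 ?_)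
      filter_upwards with τ
      rw [one_mul, ← pow_succ']
    have hsum3 : (fun τ => ∑ i : Fin 3, u i τ * v i τ) =O[𝓝[>] (0:ℝ)] (fun τ => τ ^ 4) :=
      IsBigO.fun_sum (fun i _ => hmul i)
    exact (EventuallyEq.of_eq (funext hE)).trans_isBigO hsum3
  -- combine: S := d(ω-1) τ^{ω-1} + K₃ τ³ = O(τ^{min ω 4})
  set m0 : ℕ := min ω 4 with hm0_def
  have hSO : (fun τ => d (ω - 1) * τ ^ (ω - 1) + K₃ * τ ^ 3)
      =O[𝓝[>] (0:ℝ)] (fun τ => τ ^ m0) := by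
    have hRHS : (fun τ => L τ - (h τ - K₃ * τ ^ 3) - E τ - (D τ - d (ω - 1) * τ ^ (ω - 1)))
        =O[𝓝[>] (0:ℝ)] (fun τ => τ ^ m0) := by
      have h1 := hL.trans (pow_isBigO_pow_of_le (min_le_left ω 4))
      have h2 := hh.trans (pow_isBigO_pow_of_le (min_le_right ω 4))
      have h3 := hEO.trans (pow_isBigO_pow_of_le (min_le_right ω 4))
      have h4 := hDO.trans (pow_isBigO_pow_of_le (min_le_left ω 4))
      exact ((h1.sub h2).sub h3).sub h4
    refine EventuallyEq.trans_isBigO ?_ hRHS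
    filter_upwards [Ioo_mem_nhdsGT_of_mem (show (0:ℝ) ∈ Set.Ico (0:ℝ) 1 by simp)] with τ hτ
    have hp := hpde τ hτ.1
    rw [hderiv_eq τ hτ.1 hτ.2] at hp
    linarith
  -- case analysis on ω
  have hd_omega : d (ω - 1) = (ω : ℝ) * c ω := by
    show (((ω - 1 : ℕ) : ℝ) + 1) * c (ω - 1 + 1) = (ω : ℝ) * c ω
    rw [Nat.sub_add_cancel hω]
    congr 1
    have hcast : ((ω - 1 : ℕ) : ℝ) = (ω : ℝ) - 1 := by
      rw [Nat.cast_sub hω]; simp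
    rw [hcast]; ring
  have hdω_ne : d (ω - 1) ≠ 0 := by
    rw [hd_omega]
    apply mul_ne_zero _ hcω
    exact Nat.cast_ne_zero.mpr (by omega)
  have hω4 : ω = 4 := by
    by_contra hne
    rcases Nat.lt_or_ge ω 4 with h4 | h4
    · -- ω ≤ 3 : contradiction with c ω ≠ 0
      have hm0 : m0 = ω := min_eq_left h4.le
      have hK3O : (fun τ : ℝ => K₃ * τ ^ 3) =O[𝓝[>] (0:ℝ)] (fun τ => τ ^ ω) :=
        ((isBigO_refl (fun τ : ℝ => τ ^ 3) _).const_mul_left K₃).trans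
          (pow_isBigO_pow_of_le (by omega))
      have hdO : (fun τ : ℝ => d (ω - 1) * τ ^ (ω - 1)) =O[𝓝[>] (0:ℝ)] (fun τ => τ ^ ω) := by
        have := (hm0 ▸ hSO).sub hK3O
        simpa using this
      exact hdω_ne (eq_zero_of_isBigO_pow (by omega) hdO)
    · -- ω ≥ 5 : contradiction with K₃ ≠ 0
      have h5 : 5 ≤ ω := by omega
      have hm0 : m0 = 4 := min_eq_right h4
      have hdO : (fun τ : ℝ => d (ω - 1) * τ ^ (ω - 1)) =O[𝓝[>] (0:ℝ)] (fun τ => τ ^ 4) :=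
        ((isBigO_refl (fun τ : ℝ => τ ^ (ω - 1)) _).const_mul_left (d (ω - 1))).trans
          (pow_isBigO_pow_of_le (by omega))
      have hK3O : (fun τ : ℝ => K₃ * τ ^ 3) =O[𝓝[>] (0:ℝ)] (fun τ => τ ^ 4) := by
        have := (hm0 ▸ hSO).sub hdO
        simpa using this
      exact hK₃ (eq_zero_of_isBigO_pow (by omega) hK3O)
  subst hω4
  refine ⟨rfl, ?_⟩
  have hm0 : m0 = 4 := rfl
  have hfin : (fun τ : ℝ => (d 3 + K₃) * τ ^ 3) =O[𝓝[>] (0:ℝ)] (fun τ => τ ^ 4) := by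
    refine EventuallyEq.trans_isBigO ?_ (hm0 ▸ hSO)
    filter_upwards with τ
    norm_num
    ring
  have hzero : d 3 + K₃ = 0 := eq_zero_of_isBigO_pow (by omega) hfin
  have hd3 : d 3 = 4 * c 4 := by rw [hd_def]; norm_num
  rw [hd3] at hzero
  linarith
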